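/- For a positive integer n, the following are equivalent: (1) n + 1 is a power of 2; (2) for every integer i with 1 ≤ i ≤ n, the binomial coefficient C(n − i, i) is even. -/

import Mathlib

private lemma choose_odd_iff_aux (n : ℕ) : ∀ k : ℕ,
    (¬ 2 ∣ n.choose k) ↔ ∀ i, k.testBit i = true → n.testBit i = true := by
  induction n using Nat.strong_induction_on with
  | _ n ih =>
  intro k
  rcases Nat.eq_zero_or_pos n with rfl | hn
  · constructor
    · intro h i hki
      rcases Nat.eq_zero_or_pos k with rfl | hk
      · simpa using hki
      · exact absurd (by simp [Nat.choose_eq_zero_of_lt hk]) h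
    · intro h
      have hk0 : k = 0 := by
        apply Nat.eq_of_testBit_eq
        intro i
        simp only [Nat.zero_testBit]
        by_contra hne
        have : k.testBit i = true := by
          cases hkb : k.testBit i
          · exact absurd hkb hne
          · rfl
        simpa using h i this
      subst hk0; simp
  · haveI : Fact (Nat.Prime 2) := ⟨Nat.prime_two⟩
    have hL : n.choose k ≡ (n % 2).choose (k % 2) * (n / 2).choose (k / 2) [MOD 2] :=
      Choose.choose_modEq_choose_mod_mul_choose_div_nat
    have hdvd : 2 ∣ n.choose k ↔
        2 ∣ (n % 2).choose (k % 2) * ((n / 2).choose (k / 2)) := by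
      constructor <;> intro hd
      · exact (Nat.modEq_zero_iff_dvd).1 ((((Nat.modEq_zero_iff_dvd).2 hd).symm.trans hL).symm)
      · exact (Nat.modEq_zero_iff_dvd).1 (hL.trans ((Nat.modEq_zero_iff_dvd).2 hd))
    have ihd := ih (n / 2) (Nat.div_lt_self hn one_lt_two) (k / 2)
    rw [hdvd, Nat.prime_two.dvd_mul]
    push_neg
    have h0 : (¬ 2 ∣ (n % 2).choose (k % 2)) ↔ (k % 2 = 1 → n % 2 = 1) := by
      rcases Nat.mod_two_eq_zero_or_one n with h1 | h1 <;>
        rcases Nat.mod_two_eq_zero_or_one k with h2 | h2 <;>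
          rw [h1, h2] <;> decide
    rw [h0, ihd]
    constructor
    · rintro ⟨ha, hb⟩ i hki
      cases i with
      | zero =>
        simp only [Nat.testBit_zero] at hki ⊢
        exact decide_eq_true (ha (of_decide_eq_true hki))
      | succ i =>
        rw [Nat.testBit_succ] at hki ⊢
        exact hb i hki
    · intro h
      refine ⟨fun hk1 => ?_, fun i hki => ?_⟩
      · have := h 0 (by simp [hk1])
        simpa using this
      · have := h (i + 1) (by rwa [Nat.testBit_succ])
        rwa [Nat.testBit_succ] at this

private lemma choose_odd_iff (a b : ℕ) :
    (¬ 2 ∣ a.choose b) ↔ ∀ i, b.testBit i = true → a.testBit i = true :=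
  choose_odd_iff_aux a b

/-- For a positive integer `n`, `n + 1` is a power of `2` iff for every `i` with `1 ≤ i ≤ n`
the binomial coefficient `C(n − i, i)` is even. -/
theorem n_succ_pow_two_iff_choose_even (n : ℕ) (hn : 0 < n) :
    (∃ k : ℕ, n + 1 = 2 ^ k) ↔ ∀ i : ℕ, 1 ≤ i → i ≤ n → 2 ∣ (n - i).choose i := by
  constructor
  · rintro ⟨k, hk⟩ i h1 hi
    by_contra hodd
    have hsub := (choose_odd_iff (n - i) i).1 hodd
    -- write i = 2^j * (2*t+1)
    obtain ⟨j, m, hm, him⟩ := Nat.exists_eq_two_pow_mul_odd (n := i) (by omega)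
    obtain ⟨t, ht⟩ := hm
    set P : ℕ := 2 ^ j with hPdef
    have hP : 0 < P := Nat.pow_pos (by norm_num)
    have hiP : i = 2 * P * t + P := by rw [him, ht]; ring
    -- j < k
    have hjk : j < k := by
      have h1 : 2 ^ j ≤ i := by
        calc 2 ^ j = 2 ^ j * 1 := (mul_one _).symm
        _ ≤ 2 ^ j * m := Nat.mul_le_mul_left _ (by omega)
        _ = i := him.symm
      have h2 : 2 ^ j < 2 ^ k := by omega
      exact (Nat.pow_lt_pow_iff_right one_lt_two).1 h2
    set Q : ℕ := 2 ^ (k - j - 1) with hQdef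
    have hQ : 0 < Q := Nat.pow_pos (by norm_num)
    have hkPQ : n + 1 = 2 * P * Q := by
      rw [hk, hPdef, hQdef, ← pow_succ', ← pow_add]
      congr 1
      omega
    -- t + 1 ≤ Q
    have htQ : t + 1 ≤ Q := by
      have : P * (2 * t + 1) < P * (2 * Q) := by
        calc P * (2 * t + 1) = i := by rw [hiP]; ring
        _ < n + 1 := by omega
        _ = P * (2 * Q) := by rw [hkPQ]; ring
      have := Nat.lt_of_mul_lt_mul_left this
      omega
    set s : ℕ := Q - t - 1 with hsdef
    have hQs : Q = t + 1 + s := by omega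
    have hni : n - i = P * (2 * s) + (P - 1) := by
      have hcast : (↑(n - i) : ℤ) = ↑(P * (2 * s)) + (↑P - 1) := by
        rw [Nat.cast_sub hi]
        have hn' : (n : ℤ) = 2 * P * Q - 1 := by
          have : ((n : ℤ) + 1) = 2 * P * Q := by exact_mod_cast hkPQ
          linarith
        have hi' : (i : ℤ) = 2 * P * t + P := by exact_mod_cast hiP
        have hQ' : (Q : ℤ) = t + 1 + s := by exact_mod_cast hQs
        push_cast
        rw [hn', hi', hQ']; ring
      have : (↑(n - i) : ℤ) = ↑(P * (2 * s) + (P - 1)) := by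
        rw [hcast]; push_cast [Nat.cast_sub (by omega : 1 ≤ P)]; ring
      exact_mod_cast this
    -- testBit j of i is true
    have hbit_i : i.testBit j = true := by
      rw [Nat.testBit_eq_decide_div_mod_eq]
      have : i / 2 ^ j = 2 * t + 1 := by
        rw [hiP, ← hPdef]
        rw [show 2 * P * t + P = P * (2 * t + 1) + 0 by ring]
        rw [Nat.mul_add_div hP]
        simp
      rw [this]
      simp [Nat.mul_add_mod]
    -- but testBit j of n - i is false
    have hbit_ni : (n - i).testBit j = false := by
      rw [Nat.testBit_eq_decide_div_mod_eq]
      have : (n - i) / 2 ^ j = 2 * s := by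
        rw [hni, ← hPdef, Nat.mul_add_div hP, Nat.div_eq_of_lt (by omega)]
        omega
      rw [this]
      simp [Nat.mul_mod_right]
    have := hsub j hbit_i
    rw [hbit_ni] at this
    exact Bool.false_ne_true this
  · intro h
    by_contra hne
    push_neg at hne
    obtain ⟨j, m, hm, hnm⟩ := Nat.exists_eq_two_pow_mul_odd (n := n + 1) (by omega)
    obtain ⟨a, ha⟩ := hm
    have hm1 : m ≠ 1 := by
      intro h1
      exact hne j (by rw [hnm, h1, mul_one])
    have ha1 : 1 ≤ a := by omega
    set P : ℕ := 2 ^ j with hPdef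
    have hP : 0 < P := Nat.pow_pos (by norm_num)
    have hn_eq : n + 1 = 2 * P * a + P := by rw [hnm, ha]; ring
    have hin : P ≤ n := by nlinarith
    have hni : n - P = P * (2 * (a - 1) + 1) + (P - 1) := by
      have hcast : (↑(n - P) : ℤ) = ↑P * (2 * (↑a - 1) + 1) + (↑P - 1) := by
        rw [Nat.cast_sub hin]
        have : ((n : ℤ) + 1) = 2 * P * a + P := by exact_mod_cast hn_eq
        linarith
      have : (↑(n - P) : ℤ) = ↑(P * (2 * (a - 1) + 1) + (P - 1)) := by
        rw [hcast]
        push_cast [Nat.cast_sub (by omega : 1 ≤ a), Nat.cast_sub (by omega : 1 ≤ P)]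
        ring
      exact_mod_cast this
    have hodd : ¬ 2 ∣ (n - P).choose P := by
      rw [choose_odd_iff]
      intro t htb
      rw [hPdef, Nat.testBit_two_pow] at htb
      have hjt : j = t := of_decide_eq_true htb
      subst hjt
      rw [Nat.testBit_eq_decide_div_mod_eq]
      have : (n - P) / 2 ^ j = 2 * (a - 1) + 1 := by
        rw [hni, ← hPdef, Nat.mul_add_div hP, Nat.div_eq_of_lt (by omega)]
      rw [this]
      simp [Nat.mul_add_mod]
    exact hodd (h P (by omega) hin)
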